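/- If w is any point in a closed disk D_R of radius R and z is a point on the boundary circle of D_R with z ≠ w, then Re( ((z − c)/R) · (1 / (z − w)) ) ≥ 1/(2R), where c is the center of D_R. -/

import Mathlib

open Metric

/-- Geometric core of Turán's lemma: each zero factor contributes at least
`1/(2R)` in the outer normal direction at a boundary point of the disk. -/
theorem turan_normal_direction (c : ℂ) (R : ℝ) (hR : 0 < R) (z w : ℂ)
    (hz : dist z c = R) (hw : w ∈ closedBall c R) (hwz : w ≠ z) :
    1 / (2 * R) ≤ (((z - c) / (R : ℂ)) * (1 / (z - w))).re := by
  have hb : z - w ≠ 0 := sub_ne_zero.mpr (Ne.symm hwz)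
  have hN : 0 < Complex.normSq (z - w) := Complex.normSq_pos.mpr hb
  have e1 : (z.re - c.re)^2 + (z.im - c.im)^2 = R^2 := by
    have : Complex.normSq (z - c) = R^2 := by
      rw [← Complex.sq_norm, ← Complex.dist_eq, hz]
    simpa [Complex.normSq_apply, sq] using this
  have e2 : (w.re - c.re)^2 + (w.im - c.im)^2 ≤ R^2 := by
    have h2 : ‖w - c‖ ≤ R := by
      rw [mem_closedBall, Complex.dist_eq] at hw; exact hw
    have : Complex.normSq (w - c) ≤ R^2 := by
      rw [← Complex.sq_norm]
      exact pow_le_pow_left₀ (norm_nonneg _) h2 2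
    simpa [Complex.normSq_apply, sq] using this
  have key : Complex.normSq (z - w) ≤
      2 * ((z - c) * (starRingEnd ℂ) (z - w)).re := by
    simp only [Complex.normSq_apply, Complex.mul_re, Complex.conj_re,
      Complex.conj_im, Complex.sub_re, Complex.sub_im]
    nlinarith [e1, e2]
  have hX : (((z - c) / (R : ℂ)) * (1 / (z - w))).re
      = ((z - c) * (starRingEnd ℂ) (z - w)).re / (R * Complex.normSq (z - w)) := by
    have hR' : (R : ℂ) ≠ 0 := Complex.ofReal_ne_zero.mpr hR.ne'
    have hN' : ((Complex.normSq (z - w) : ℝ) : ℂ) ≠ 0 := by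
      exact_mod_cast Complex.ofReal_ne_zero.mpr hN.ne'
    have : ((z - c) / (R : ℂ)) * (1 / (z - w))
        = ((z - c) * (starRingEnd ℂ) (z - w)) / ((R * Complex.normSq (z - w) : ℝ) : ℂ) := by
      rw [one_div, Complex.inv_def]
      push_cast
      field_simp
    rw [this, Complex.div_ofReal_re]
  rw [hX]
  rw [div_le_div_iff₀ (by positivity) (by positivity)]
  nlinarith [key, hN, hR]
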